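/- arXiv:1706.09866 — 2 statements merged into one kernel-verified Lean document; each statement's English description precedes it below -/
import Mathlib

section
/- Let I be a nearly complete intersection (NCI) squarefree monomial ideal in S. If m_1 and m_2 are two distinct minimal monomial generators of I, then their greatest common divisor has degree at most 1; equivalently, m_1 and m_2 have at most one variable in common. -/
open CategoryTheory MvPolynomial

noncomputable section

/-- `dim_k Tor_i^R(M, R/mx)` : the `i`-th Betti number of the `R`-module `M`, where `R` is a
`k`-algebra and `mx` is (the analogue of) the irrelevant maximal ideal, so that `R ⧸ mx ≅ k`. -/
def bettiGen (k : Type) [Field k] (R : Type) [CommRing R] [Algebra k R]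
    (mx : Ideal R) (M : ModuleCat R) (i : ℕ) : ℕ :=
  Module.finrank k
    (RestrictScalars k R (((Tor (ModuleCat R) i).obj M).obj (ModuleCat.of R (R ⧸ mx))))

/-- The irrelevant maximal ideal `(x_1, …, x_m)` of `S = k[x_1, …, x_m]`. -/
def irrel (k : Type) [Field k] (m : ℕ) : Ideal (MvPolynomial (Fin m) k) :=
  Ideal.span (Set.range (X : Fin m → MvPolynomial (Fin m) k))

/-- `β_i(S/I) = dim_k Tor_i^S(S/I, k)` for an ideal `I ⊆ S = k[x_1, …, x_m]`. -/
def betti (k : Type) [Field k] (m : ℕ) (I : Ideal (MvPolynomial (Fin m) k)) (i : ℕ) : ℕ :=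
  bettiGen k (MvPolynomial (Fin m) k) (irrel k m)
    (ModuleCat.of _ (MvPolynomial (Fin m) k ⧸ I)) i

/-- `β(S/I) = Σ_i β_i(S/I)`, the (finite) total Betti number, valued in `ℕ∞`. -/
def bettiSum (k : Type) [Field k] (m : ℕ) (I : Ideal (MvPolynomial (Fin m) k)) : ℕ∞ :=
  ∑' i, (betti k m I i : ℕ∞)

/-- The (Krull) height of an ideal: the infimum of the heights of primes containing it. -/
def idealHeight {R : Type} [CommRing R] (I : Ideal R) : ℕ∞ :=
  ⨅ (P : PrimeSpectrum R) (_ : I ≤ P.asIdeal), Order.height P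

/-- An ideal is a complete intersection iff it can be generated by a regular sequence. -/
def IsCI {R : Type} [CommRing R] (I : Ideal R) : Prop :=
  ∃ rs : List R, RingTheory.Sequence.IsRegular R rs ∧ I = Ideal.span {r | r ∈ rs}

/-- A monomial ideal: an ideal generated by monomials. -/
def IsMonomialIdeal {k : Type} [Field k] {m : ℕ} (I : Ideal (MvPolynomial (Fin m) k)) : Prop :=
  ∃ A : Set (Fin m →₀ ℕ), I = Ideal.span ((fun a => monomial a (1 : k)) '' A)

/-- A squarefree monomial ideal: an ideal generated by squarefree monomials. -/
def IsSqFreeMonomialIdeal {k : Type} [Field k] {m : ℕ}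
    (I : Ideal (MvPolynomial (Fin m) k)) : Prop :=
  ∃ A : Set (Fin m →₀ ℕ), (∀ a ∈ A, ∀ j, a j ≤ 1) ∧
    I = Ideal.span ((fun a => monomial a (1 : k)) '' A)

/-- `a` is (the exponent vector of) a minimal monomial generator of the monomial ideal `I`:
the monomial `x^a` lies in `I` but no proper monomial divisor of it does. -/
def IsMinGen {k : Type} [Field k] {m : ℕ} (I : Ideal (MvPolynomial (Fin m) k))
    (a : Fin m →₀ ℕ) : Prop :=
  (monomial a (1 : k)) ∈ I ∧
    ∀ j, a j ≠ 0 → (monomial (a - Finsupp.single j 1) (1 : k)) ∉ I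

/-- The total degree of the monomial with exponent vector `a`. -/
def expDeg {m : ℕ} (a : Fin m →₀ ℕ) : ℕ := a.sum fun _ e => e

/-- The variable `x` lies in the support of the monomial ideal `I`, i.e. it divides some
minimal monomial generator of `I`. -/
def InSupport {k : Type} [Field k] {m : ℕ} (I : Ideal (MvPolynomial (Fin m) k))
    (x : Fin m) : Prop :=
  ∃ a, IsMinGen I a ∧ a x ≠ 0

/-- `I(x=1)` : the ideal generated by the monomials obtained from the minimal monomial
generators of `I` by substituting `1` for the variable `x`. -/
def subOne {k : Type} [Field k] {m : ℕ} (I : Ideal (MvPolynomial (Fin m) k))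
    (x : Fin m) : Ideal (MvPolynomial (Fin m) k) :=
  Ideal.span ((fun a => monomial (a.erase x) (1 : k)) '' {a | IsMinGen I a})

/-- A nearly complete intersection (NCI): a squarefree monomial ideal, generated in degree
at least two, which is not a CI, but such that `I(x=1)` is a CI for every variable `x`
in the support of `I`. -/
def IsNCI {k : Type} [Field k] {m : ℕ} (I : Ideal (MvPolynomial (Fin m) k)) : Prop :=
  IsSqFreeMonomialIdeal I ∧ (∀ a, IsMinGen I a → 2 ≤ expDeg a) ∧ ¬ IsCI I ∧
    ∀ x, InSupport I x → IsCI (subOne I x)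

lemma nciAux_smul_top {R : Type} [CommRing R] (I : Ideal R) :
    (I • (⊤ : Submodule R R)) = I := by rw [Ideal.smul_eq_mul, Ideal.mul_top]

lemma nciAux_stepA {R : Type} [CommRing R] (rs : List R)
    (h : RingTheory.Sequence.IsWeaklyRegular R rs) :
    ∀ (n : ℕ) (hn : n ≤ rs.length) (c : Fin n → R),
      (∑ i : Fin n, c i * rs.get (Fin.castLE hn i)) = 0 →
      ∀ i, c i ∈ Ideal.ofList (rs.take n) := by
  intro n
  induction n with
  | zero => intro _ c _ i; exact i.elim0
  | succ n ih =>
    intro hn c hc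
    have hn' : n ≤ rs.length := le_trans (Nat.le_succ n) hn
    have hnlt : n < rs.length := lt_of_lt_of_le (Nat.lt_succ_self n) hn
    set In : Ideal R := Ideal.ofList (rs.take n) with hIn
    -- the partial sum lies in In
    have hmemi : ∀ i : Fin n, rs.get (Fin.castLE hn' i) ∈ In := by
      intro i
      apply Ideal.subset_span
      have hlen : (i : ℕ) < (rs.take n).length := by
        simpa [List.length_take] using lt_of_lt_of_le i.2 (le_min hn' le_rfl |>.trans (min_le_left _ _)) |>.trans_le le_rfl
      have heq : (rs.take n)[(i:ℕ)] = rs.get (Fin.castLE hn' i) := by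
        simp [List.getElem_take, List.get_eq_getElem]
      have : rs.get (Fin.castLE hn' i) ∈ rs.take n := by
        rw [← heq]; exact List.getElem_mem hlen
      exact this
    rw [Fin.sum_univ_castSucc] at hc
    have hcast : ∀ i : Fin n, rs.get (Fin.castLE hn i.castSucc) = rs.get (Fin.castLE hn' i) := by
      intro i; rfl
    simp only [hcast] at hc
    have hsum_mem : (∑ i : Fin n, c i.castSucc * rs.get (Fin.castLE hn' i)) ∈ In :=
      Ideal.sum_mem _ fun i _ => Ideal.mul_mem_left _ _ (hmemi i)
    -- last coefficient is in In by regularity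
    have hreg := h.regular_mod_prev n hnlt
    have hlast : c (Fin.last n) ∈ In := by
      have hzero : Submodule.Quotient.mk (p := In • (⊤ : Submodule R R)) (rs[n] * c (Fin.last n)) = 0 := by
        rw [Submodule.Quotient.mk_eq_zero, nciAux_smul_top]
        have : rs[n] * c (Fin.last n) = c (Fin.last n) * rs.get (Fin.castLE hn (Fin.last n)) := by
          rw [mul_comm]; rfl
        rw [this]
        have : c (Fin.last n) * rs.get (Fin.castLE hn (Fin.last n))
            = - ∑ i : Fin n, c i.castSucc * rs.get (Fin.castLE hn' i) := by linear_combination hc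
        rw [this]; exact neg_mem hsum_mem
      have h1 : rs[n] • (Submodule.Quotient.mk (p := In • (⊤ : Submodule R R)) (c (Fin.last n)))
          = rs[n] • (0 : R ⧸ (In • (⊤ : Submodule R R))) := by
        rw [smul_zero, ← Submodule.Quotient.mk_smul]
        rw [smul_eq_mul]
        exact hzero
      have := hreg h1
      rwa [Submodule.Quotient.mk_eq_zero, nciAux_smul_top] at this
    -- representation of last coefficient
    have hrange : {r | r ∈ rs.take n} = Set.range (fun i : Fin n => rs.get (Fin.castLE hn' i)) := by
      ext r
      constructor
      · intro hr
        obtain ⟨j, hj, rfl⟩ := List.mem_iff_getElem.mp hr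
        have hjn : j < n := by simpa [List.length_take, hn'] using hj
        exact ⟨⟨j, hjn⟩, by simp [List.getElem_take, List.get_eq_getElem]⟩
      · rintro ⟨i, rfl⟩
        have hlen : (i : ℕ) < (rs.take n).length := by simp [List.length_take]; omega
        have heq : (rs.take n)[(i:ℕ)] = rs.get (Fin.castLE hn' i) := by
          simp [List.getElem_take, List.get_eq_getElem]
        show (fun i => rs.get (Fin.castLE hn' i)) i ∈ {r | r ∈ rs.take n}
        simp only [Set.mem_setOf_eq, ← heq]
        exact List.getElem_mem hlen
    have hrep : ∃ d : Fin n → R, ∑ i, d i • (rs.get (Fin.castLE hn' i)) = c (Fin.last n) := by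
      rw [← Submodule.mem_span_range_iff_exists_fun, ← hrange]; exact hlast
    obtain ⟨d, hd⟩ := hrep
    set fl : R := rs.get (Fin.castLE hn (Fin.last n)) with hfl
    -- the modified coefficients give a zero combination of the prefix
    have hzero2 : (∑ i : Fin n, (c i.castSucc + d i * fl) * rs.get (Fin.castLE hn' i)) = 0 := by
      have : (∑ i : Fin n, (c i.castSucc + d i * fl) * rs.get (Fin.castLE hn' i))
          = (∑ i : Fin n, c i.castSucc * rs.get (Fin.castLE hn' i))
            + (∑ i : Fin n, d i • rs.get (Fin.castLE hn' i)) * fl := by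
        rw [Finset.sum_mul, ← Finset.sum_add_distrib]
        congr 1; ext i; simp [smul_eq_mul]; ring
      rw [this, hd]
      exact hc
    have hih := ih hn' (fun i => c i.castSucc + d i * fl) hzero2
    -- monotonicity and membership of fl
    have hmono : In ≤ Ideal.ofList (rs.take (n+1)) := by
      apply Ideal.span_mono
      intro r hr
      have : rs.take n = (rs.take (n+1)).take n := by rw [List.take_take]; congr 1; omega
      rw [this] at hr
      exact List.take_subset _ _ hr
    have hflmem : fl ∈ Ideal.ofList (rs.take (n+1)) := by
      apply Ideal.subset_span
      have hlen : n < (rs.take (n+1)).length := by simp [List.length_take]; omega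
      have heq : (rs.take (n+1))[n] = fl := by simp [List.getElem_take, hfl, List.get_eq_getElem]
      show fl ∈ {r | r ∈ rs.take (n+1)}
      simp only [Set.mem_setOf_eq, ← heq]
      exact List.getElem_mem hlen
    intro i
    refine Fin.lastCases ?_ ?_ i
    · exact hmono hlast
    · intro j
      have : c j.castSucc = (c j.castSucc + d j * fl) - d j * fl := by ring
      rw [this]
      exact sub_mem (hmono (hih j)) (Ideal.mul_mem_left _ _ hflmem)

lemma nciAux_stepA' {R : Type} [CommRing R] (rs : List R)
    (h : RingTheory.Sequence.IsWeaklyRegular R rs) (c : Fin rs.length → R)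
    (hc : (∑ i, c i * rs.get i) = 0) :
    ∀ i, c i ∈ Ideal.span {r | r ∈ rs} := by
  have := nciAux_stepA rs h rs.length le_rfl c (by simpa using hc)
  simpa [List.take_length] using this

lemma nciAux_key {k : Type} [Field k] {m : ℕ} (G : Set (Fin m →₀ ℕ))
    (u v : Fin m →₀ ℕ) (hu : u ∈ G) (hv : v ∈ G)
    (hminu : ∀ w ∈ G, w ≤ u → w = u) (hminv : ∀ w ∈ G, w ≤ v → w = v)
    (huv : u ≠ v) (y : Fin m) (huy : u y ≠ 0) (hvy : v y ≠ 0) :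
    ¬ IsCI (Ideal.span ((fun a => monomial a (1 : k)) '' G)) := by
  rintro ⟨rs, hreg, hspan⟩
  set J : Ideal (MvPolynomial (Fin m) k) := Ideal.span ((fun a => monomial a (1 : k)) '' G) with hJdef
  have hrange : {r | r ∈ rs} = Set.range rs.get := by
    ext r; simp [List.mem_iff_get, eq_comm]
  have hJ : J = Ideal.span (Set.range rs.get) := by rw [hspan, hrange]
  have hgen : ∀ w ∈ G, monomial w (1 : k) ∈ J := fun w hw =>
    Ideal.subset_span ⟨w, hw, rfl⟩
  have hrsJ : ∀ i, rs.get i ∈ J := fun i => by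
    rw [hspan]; exact Ideal.subset_span (List.get_mem rs i)
  -- representations
  obtain ⟨a, ha⟩ := (Submodule.mem_span_range_iff_exists_fun (MvPolynomial (Fin m) k)).mp (hJ ▸ hgen u hu)
  obtain ⟨b, hb⟩ := (Submodule.mem_span_range_iff_exists_fun (MvPolynomial (Fin m) k)).mp (hJ ▸ hgen v hv)
  simp only [smul_eq_mul] at ha hb
  -- the gcd
  set g : Fin m →₀ ℕ := u - (u - v) with hgdef
  have happ : ∀ j, g j = u j - (u j - v j) := by
    intro j; rw [hgdef]; rw [Finsupp.tsub_apply, Finsupp.tsub_apply]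
  have hgu : ∀ j, g j ≤ u j := fun j => by rw [happ j]; omega
  have hgv : ∀ j, g j ≤ v j := fun j => by rw [happ j]; omega
  have hgy : g y ≠ 0 := by rw [happ y]; omega
  -- the combination vanishes
  have hmono : monomial (v - g) (1:k) * monomial u 1 = monomial (u - g) 1 * monomial v 1 := by
    rw [monomial_mul, monomial_mul]
    have : (v - g) + u = (u - g) + v := by
      ext j
      simp only [Finsupp.add_apply, Finsupp.tsub_apply]
      have h1 := hgu j; have h2 := hgv j
      have h3 := happ j
      omega
    rw [this]
  have hcomb : (∑ i, (monomial (v - g) (1:k) * a i - monomial (u - g) 1 * b i) * rs.get i) = 0 := by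
    have : (∑ i, (monomial (v - g) (1:k) * a i - monomial (u - g) 1 * b i) * rs.get i)
        = monomial (v - g) (1:k) * (∑ i, a i * rs.get i)
          - monomial (u - g) 1 * (∑ i, b i * rs.get i) := by
      rw [Finset.mul_sum, Finset.mul_sum, ← Finset.sum_sub_distrib]
      congr 1; ext i; ring
    rw [this, ha, hb, hmono, sub_self]
  have hin : ∀ i, (monomial (v - g) (1:k) * a i - monomial (u - g) 1 * b i) ∈ J := by
    intro i
    have := nciAux_stepA' rs hreg.toIsWeaklyRegular _ hcomb i
    rwa [← hspan] at this
  -- a coefficient with nonzero constant term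
  have hconst : ∃ i, MvPolynomial.coeff 0 (a i) ≠ 0 := by
    by_contra hcon
    push_neg at hcon
    have hmI : ∀ i, a i ∈ Ideal.span ((fun s => monomial s (1:k)) '' {e : Fin m →₀ ℕ | e ≠ 0}) := by
      intro i
      rw [mem_ideal_span_monomial_image]
      intro e he
      refine ⟨e, ?_, le_rfl⟩
      intro h0
      rw [h0] at he
      exact (mem_support_iff.mp he) (hcon i)
    have hmem : monomial u (1:k) ∈
        Ideal.span ((fun s => monomial s (1:k)) '' {e : Fin m →₀ ℕ | e ≠ 0}) * J := by
      rw [← ha]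
      exact Ideal.sum_mem _ fun i _ => Ideal.mul_mem_mul (hmI i) (hrsJ i)
    have hprod : Ideal.span ((fun s => monomial s (1:k)) '' {e : Fin m →₀ ℕ | e ≠ 0}) * J
        = Ideal.span ((fun s => monomial s (1:k)) ''
            {e : Fin m →₀ ℕ | ∃ e₁ w, e₁ ≠ 0 ∧ w ∈ G ∧ e = e₁ + w}) := by
      rw [hJdef, Ideal.span_mul_span]
      congr 1
      ext p
      constructor
      · simp only [Set.mem_mul]
        rintro ⟨s, ⟨e₁, he₁, rfl⟩, t, ⟨w, hw, rfl⟩, hp⟩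
        replace hp := hp.symm
        exact ⟨e₁ + w, ⟨e₁, w, he₁, hw, rfl⟩, by rw [hp, monomial_mul, one_mul]⟩
      · rintro ⟨e, ⟨e₁, w, he₁, hw, rfl⟩, rfl⟩
        simp only [Set.mem_mul]
        exact ⟨monomial e₁ 1, ⟨e₁, he₁, rfl⟩, monomial w 1, ⟨w, hw, rfl⟩,
          by simp [monomial_mul]⟩
    rw [hprod, mem_ideal_span_monomial_image] at hmem
    obtain ⟨e, ⟨e₁, w, he₁, hw, rfl⟩, hle⟩ := hmem u (by
      rw [mem_support_iff, coeff_monomial, if_pos rfl]; exact one_ne_zero)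
    have hwu : w ≤ u := le_trans (le_add_self) hle
    have := hminu w hw hwu
    subst this
    apply he₁
    ext j
    have := (Finsupp.le_def.mp hle) j
    simp only [Finsupp.add_apply] at this
    simp only [Finsupp.coe_zero, Pi.zero_apply]
    omega
  obtain ⟨i0, hc0⟩ := hconst
  -- case split
  by_cases hle : u - g ≤ v - g
  · have huv' : u ≤ v := by
      rw [Finsupp.le_def]
      intro j
      have h1 := (Finsupp.le_def.mp hle) j
      simp only [Finsupp.tsub_apply] at h1
      have h2 := hgu j; have h3 := hgv j
      omega
    exact huv (hminv u hu huv')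
  · have hP := hin i0
    rw [hJdef, mem_ideal_span_monomial_image] at hP
    have hsupp : (v - g) ∈ (monomial (v - g) (1:k) * a i0 - monomial (u - g) 1 * b i0).support := by
      rw [mem_support_iff, coeff_sub, coeff_monomial_mul', coeff_monomial_mul',
        if_pos le_rfl, if_neg hle, tsub_self, one_mul, sub_zero]
      exact hc0
    obtain ⟨w, hwG, hwle⟩ := hP (v - g) hsupp
    have hwv : w ≤ v := le_trans hwle tsub_le_self
    have := hminv w hwG hwv
    subst this
    have h4 := (Finsupp.le_def.mp hwle) y
    simp only [Finsupp.tsub_apply] at h4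
    have h5 := happ y
    have h6 := hgv y
    omega

/-- **Lemma.** If `I` is a nearly complete intersection and `m₁, m₂` are two distinct minimal
monomial generators of `I`, then their gcd has degree at most one, i.e. they have at most one
variable in common. -/
theorem nci_gcd_min_gens (k : Type) [Field k] (m : ℕ)
    (I : Ideal (MvPolynomial (Fin m) k)) (hI : IsNCI I)
    (a b : Fin m →₀ ℕ) (ha : IsMinGen I a) (hb : IsMinGen I b) (hab : a ≠ b) :
    (a.support ∩ b.support).card ≤ 1 := by
  by_contra hcard
  push_neg at hcard
  obtain ⟨x, hx, y, hy, hxy⟩ := Finset.one_lt_card.mp hcard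
  rw [Finset.mem_inter, Finsupp.mem_support_iff, Finsupp.mem_support_iff] at hx hy
  obtain ⟨hax, hbx⟩ := hx
  obtain ⟨hay, hby⟩ := hy
  obtain ⟨A, hA1, hAspan⟩ := hI.1
  -- membership criterion for monomials of I
  have memI : ∀ c : Fin m →₀ ℕ, (monomial c (1 : k)) ∈ I ↔ ∃ w ∈ A, w ≤ c := by
    intro c
    rw [hAspan, mem_ideal_span_monomial_image]
    constructor
    · intro h
      exact h c (by rw [mem_support_iff, coeff_monomial, if_pos rfl]; exact one_ne_zero)
    · rintro ⟨w, hw, hwc⟩ e he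
      rw [mem_support_iff, coeff_monomial] at he
      rcases eq_or_ne c e with rfl | hne
      · exact ⟨w, hw, hwc⟩
      · rw [if_neg hne] at he; exact absurd rfl he
  -- minimal generators are squarefree
  have hsq : ∀ c, IsMinGen I c → ∀ j, c j ≤ 1 := by
    intro c hc j
    by_contra h2
    push_neg at h2
    obtain ⟨w, hwA, hwc⟩ := (memI c).mp hc.1
    have hle : w ≤ c - Finsupp.single j 1 := by
      rw [Finsupp.le_def]
      intro l
      rw [Finsupp.tsub_apply]
      have h3 := (Finsupp.le_def.mp hwc) l
      have h4 := hA1 w hwA l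
      rcases eq_or_ne l j with rfl | hlj
      · rw [Finsupp.single_apply, if_pos rfl]; omega
      · rw [Finsupp.single_apply, if_neg (Ne.symm hlj)]; omega
    exact hc.2 j (by omega) ((memI _).mpr ⟨w, hwA, hle⟩)
  -- a monomial of I dividing a minimal generator equals it
  have habs : ∀ c c', IsMinGen I c' → (monomial c (1 : k)) ∈ I → c ≤ c' → c = c' := by
    intro c c' hc' hcI hle
    by_contra hne
    have : ∃ j, c j < c' j := by
      by_contra hno
      push_neg at hno
      exact hne (le_antisymm hle (Finsupp.le_def.mpr hno))
    obtain ⟨j, hj⟩ := this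
    obtain ⟨w, hwA, hwc⟩ := (memI c).mp hcI
    have hle2 : w ≤ c' - Finsupp.single j 1 := by
      rw [Finsupp.le_def]
      intro l
      rw [Finsupp.tsub_apply, Finsupp.single_apply]
      have h3 := (Finsupp.le_def.mp hwc) l
      have h4 := (Finsupp.le_def.mp hle) l
      rcases eq_or_ne j l with rfl | hlj
      · rw [if_pos rfl]; omega
      · rw [if_neg hlj]; omega
    exact hc'.2 j (by omega) ((memI _).mpr ⟨w, hwA, hle2⟩)
  -- erasures of minimal generators that divide (erase x a) come from a itself
  have hkey : ∀ (p : Fin m →₀ ℕ) (hp : IsMinGen I p) (hpx : p x ≠ 0)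
      (c : Fin m →₀ ℕ), IsMinGen I c → c.erase x ≤ p.erase x → c = p := by
    intro p hp hpx c hc hle
    have hcp : c ≤ p := by
      rw [Finsupp.le_def]
      intro l
      rcases eq_or_ne l x with rfl | hlx
      · have := hsq c hc l; omega
      · have := (Finsupp.le_def.mp hle) l
        rwa [Finsupp.erase_ne hlx, Finsupp.erase_ne hlx] at this
    exact habs c p hp hc.1 hcp
  -- set up the key lemma for J = subOne I x
  have hIsupp : InSupport I x := ⟨a, ha, hax⟩
  have hCI : IsCI (subOne I x) := hI.2.2.2 x hIsupp
  have hsubOne : subOne I x = Ideal.span ((fun e => monomial e (1 : k)) ''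
      ((fun c : Fin m →₀ ℕ => c.erase x) '' {c | IsMinGen I c})) := by
    rw [subOne, Set.image_image]
  rw [hsubOne] at hCI
  refine nciAux_key ((fun c : Fin m →₀ ℕ => c.erase x) '' {c | IsMinGen I c}) (a.erase x) (b.erase x) ⟨a, ha, rfl⟩ ⟨b, hb, rfl⟩ ?_ ?_ ?_ y ?_ ?_ hCI
  · rintro w ⟨c, hc, rfl⟩ hle
    rw [hkey a ha hax c hc hle]
  · rintro w ⟨c, hc, rfl⟩ hle
    rw [hkey b hb hbx c hc hle]
  · intro heq
    apply hab
    ext l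
    rcases eq_or_ne l x with rfl | hlx
    · have h1 := hsq a ha l; have h2 := hsq b hb l
      omega
    · have := congrArg (fun f : Fin m →₀ ℕ => f l) heq
      simpa [Finsupp.erase_ne hlx] using this
  · rwa [Finsupp.erase_ne (Ne.symm hxy)]
  · rwa [Finsupp.erase_ne (Ne.symm hxy)]

end
end

section
/- Let I be a nearly complete intersection (NCI) squarefree monomial ideal in S and let F be a minimal monomial generator of I. Then there exists another minimal monomial generator of I having a variable in common with F. -/
open CategoryTheory MvPolynomial

noncomputable section

open RingTheory.Sequence

section Generic
variable {R : Type} [CommRing R]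

lemma my_smul_top_eq (I : Ideal R) : (I • (⊤ : Submodule R R)) = I := by
  rw [Ideal.smul_eq_mul, Ideal.mul_top]

lemma isSMulRegular_quot_iff (N : Ideal R) (r : R) :
    IsSMulRegular (R ⧸ (N • (⊤ : Submodule R R))) r ↔ ∀ f, r * f ∈ N → f ∈ N := by
  rw [my_smul_top_eq]
  constructor
  · intro h f hf
    have e1 : r • (Submodule.Quotient.mk (p := N) f) = r • (Submodule.Quotient.mk (p := N) 0) := by
      rw [← Submodule.Quotient.mk_smul, ← Submodule.Quotient.mk_smul, Submodule.Quotient.eq]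
      simpa [smul_eq_mul] using hf
    have e2 := h e1
    rw [Submodule.Quotient.eq] at e2
    simpa using e2
  · intro h x y hxy
    obtain ⟨f, rfl⟩ := Submodule.Quotient.mk_surjective N x
    obtain ⟨g, rfl⟩ := Submodule.Quotient.mk_surjective N y
    have hxy' : r • (Submodule.Quotient.mk (p := N) f) = r • (Submodule.Quotient.mk (p := N) g) := hxy
    rw [← Submodule.Quotient.mk_smul, ← Submodule.Quotient.mk_smul, Submodule.Quotient.eq] at hxy'
    have : r * (f - g) ∈ N := by rw [mul_sub]; simpa [smul_eq_mul] using hxy'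
    exact (Submodule.Quotient.eq N).2 (h _ this)

lemma weaklyRegular_prefix {l : List R} {r : R}
    (h : IsWeaklyRegular R (l ++ [r])) : IsWeaklyRegular R l := by
  rw [isWeaklyRegular_iff] at h ⊢
  intro i hi
  have hi' : i < (l ++ [r]).length := by simp; omega
  have := h i hi'
  rwa [List.take_append_of_le_length (by omega), List.getElem_append_left] at this

lemma weaklyRegular_last {l : List R} {r : R}
    (h : IsWeaklyRegular R (l ++ [r])) :
    ∀ f, r * f ∈ Ideal.ofList l → f ∈ Ideal.ofList l := by
  rw [isWeaklyRegular_iff] at h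
  have hi : l.length < (l ++ [r]).length := by simp
  have := h l.length hi
  rw [List.take_left] at this
  rw [List.getElem_append_right (le_refl _)] at this
  simp only [Nat.sub_self, List.getElem_singleton] at this
  exact (isSMulRegular_quot_iff _ _).1 this

lemma mem_ofList_iff (l : List R) (f : R) :
    f ∈ Ideal.ofList l ↔ ∃ c : Fin l.length → R, ∑ i, c i * l.get i = f := by
  have hset : {r | r ∈ l} = Set.range l.get := by
    ext r; simp [List.mem_iff_get]
  rw [Ideal.ofList, hset]
  exact Submodule.mem_span_range_iff_exists_fun R

lemma syzygy_coeff_mem : ∀ (l : List R), IsWeaklyRegular R l →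
    ∀ c : Fin l.length → R, (∑ i, c i * l.get i = 0) → ∀ i, c i ∈ Ideal.ofList l := by
  intro l
  induction l using List.reverseRecOn with
  | nil => intro _ c _ i; exact absurd i.isLt (by simp)
  | append_singleton l r ih =>
    intro h c hc i
    have e : (l ++ [r]).length = l.length + 1 := by simp
    have d : Fin (l.length + 1) → R := fun j => c (Fin.cast e.symm j)
    have hgl : ∀ j : Fin l.length, (l ++ [r]).get (Fin.cast e.symm j.castSucc) = l.get j := by
      intro j
      show (l ++ [r])[(j : ℕ)]'_ = _
      rw [List.getElem_append_left j.isLt]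
      rfl
    have hgr : (l ++ [r]).get (Fin.cast e.symm (Fin.last l.length)) = r := by
      show (l ++ [r])[(l.length : ℕ)]'_ = _
      rw [List.getElem_append_right (le_refl _)]
      simp
    have hsum : ∑ j : Fin (l.length + 1),
        c (Fin.cast e.symm j) * (l ++ [r]).get (Fin.cast e.symm j) = 0 := by
      rw [← hc]
      exact Fintype.sum_equiv (finCongr e.symm) _ _ (fun j => rfl)
    rw [Fin.sum_univ_castSucc] at hsum
    rw [hgr] at hsum
    have hsum2 : (∑ j : Fin l.length, c (Fin.cast e.symm j.castSucc) * l.get j)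
        + c (Fin.cast e.symm (Fin.last l.length)) * r = 0 := by
      rw [← hsum]
      congr 1
      exact Finset.sum_congr rfl (fun j _ => by rw [hgl])
    have hlast : c (Fin.cast e.symm (Fin.last l.length)) ∈ Ideal.ofList l := by
      apply weaklyRegular_last h
      have heq : r * c (Fin.cast e.symm (Fin.last l.length))
          = - ∑ j : Fin l.length, c (Fin.cast e.symm j.castSucc) * l.get j := by
        linear_combination hsum2
      rw [heq]
      exact neg_mem (Ideal.sum_mem _ (fun j _ =>
        Ideal.mul_mem_left _ _ (Ideal.subset_span (List.get_mem l j))))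
    obtain ⟨w, hw⟩ := (mem_ofList_iff l _).1 hlast
    have hrel : ∑ j : Fin l.length,
        (c (Fin.cast e.symm j.castSucc) + w j * r) * l.get j = 0 := by
      have expand : ∑ j : Fin l.length,
          (c (Fin.cast e.symm j.castSucc) + w j * r) * l.get j
          = (∑ j : Fin l.length, c (Fin.cast e.symm j.castSucc) * l.get j)
            + (∑ j : Fin l.length, w j * l.get j) * r := by
        rw [Finset.sum_mul, ← Finset.sum_add_distrib]
        exact Finset.sum_congr rfl (fun j _ => by ring)
      rw [expand, hw, hsum2]
    have hofl : Ideal.ofList l ≤ Ideal.ofList (l ++ [r]) := by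
      rw [Ideal.ofList_append]; exact le_sup_left
    have hr : r ∈ Ideal.ofList (l ++ [r]) := Ideal.subset_span (by simp)
    by_cases hi : (i : ℕ) < l.length
    · have h1 := ih (weaklyRegular_prefix h) _ hrel ⟨(i : ℕ), hi⟩
      have hci : c (Fin.cast e.symm (Fin.castSucc ⟨(i : ℕ), hi⟩)) = c i :=
        congrArg c (Fin.ext rfl)
      rw [hci] at h1
      have hsplit : c i = (c i + w ⟨(i : ℕ), hi⟩ * r) - w ⟨(i : ℕ), hi⟩ * r := by ring
      rw [hsplit]
      exact sub_mem (hofl h1) (Ideal.mul_mem_left _ _ hr)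
    · have hival : (i : ℕ) = l.length := by
        have h2 := i.isLt
        simp only [List.length_append, List.length_singleton] at h2
        omega
      have hci : c i = c (Fin.cast e.symm (Fin.last l.length)) :=
        congrArg c (Fin.ext hival)
      rw [hci]
      exact hofl hlast

end Generic


section Monomial

variable {k : Type} [Field k] {m : ℕ}

/-- span of monomials with exponents in `E`. -/
def msp (E : Set (Fin m →₀ ℕ)) : Ideal (MvPolynomial (Fin m) k) :=
  Ideal.span ((fun e => monomial e (1 : k)) '' E)

lemma mem_msp_iff {E : Set (Fin m →₀ ℕ)} {p : MvPolynomial (Fin m) k} :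
    p ∈ msp E ↔ ∀ w ∈ p.support, ∃ e ∈ E, e ≤ w :=
  MvPolynomial.mem_ideal_span_monomial_image

lemma mono_mem_msp {E : Set (Fin m →₀ ℕ)} {c : Fin m →₀ ℕ} :
    (monomial c (1 : k)) ∈ msp E ↔ ∃ e ∈ E, e ≤ c := by
  rw [mem_msp_iff]
  classical
  simp [MvPolynomial.support_monomial]

lemma msp_upward {E : Set (Fin m →₀ ℕ)} {c d : Fin m →₀ ℕ}
    (hc : (monomial c (1 : k)) ∈ msp E) (hcd : c ≤ d) : (monomial d (1 : k)) ∈ msp E := by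
  rw [mono_mem_msp] at hc ⊢
  obtain ⟨e, he, hec⟩ := hc
  exact ⟨e, he, hec.trans hcd⟩

lemma mono_mul (e f : Fin m →₀ ℕ) :
    (monomial e (1 : k)) * monomial f 1 = monomial (e + f) 1 := by
  rw [MvPolynomial.monomial_mul, one_mul]

lemma mul_mem_of_forall_gens {K : Ideal (MvPolynomial (Fin m) k)}
    {z : MvPolynomial (Fin m) k} {T : Set (MvPolynomial (Fin m) k)}
    (h : ∀ w ∈ T, z * w ∈ K) : ∀ t ∈ Ideal.span T, z * t ∈ K := by
  intro t ht
  induction ht using Submodule.span_induction with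
  | mem w hw => exact h w hw
  | zero => rw [mul_zero]; exact zero_mem _
  | add p q _ _ hp hq => rw [mul_add]; exact add_mem hp hq
  | smul c p _ hp =>
    rw [smul_eq_mul, ← mul_assoc, mul_comm z c, mul_assoc]
    exact Ideal.mul_mem_left _ _ hp

lemma mul_msp_mem {E F : Set (Fin m →₀ ℕ)} {p q : MvPolynomial (Fin m) k}
    (hp : p ∈ msp E) (hq : q ∈ msp F) :
    p * q ∈ msp (Set.image2 (· + ·) E F) := by
  refine mul_mem_of_forall_gens (fun w hw => ?_) q hq
  obtain ⟨f, hf, rfl⟩ := hw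
  rw [mul_comm]
  refine mul_mem_of_forall_gens (fun w' hw' => ?_) p hp
  obtain ⟨e, he, rfl⟩ := hw'
  rw [mono_mul, add_comm f e]
  exact Ideal.subset_span ⟨e + f, Set.mem_image2_of_mem he hf, rfl⟩

lemma shift_mem {F : Set (Fin m →₀ ℕ)} {v : Fin m →₀ ℕ} {p : MvPolynomial (Fin m) k}
    (hv : (monomial v (1 : k)) * p ∈ msp F) : p ∈ msp ((fun e => e - v) '' F) := by
  rw [mem_msp_iff] at hv ⊢
  intro w hw
  have hmem : (v + w) ∈ ((monomial v (1 : k)) * p).support := by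
    rw [MvPolynomial.mem_support_iff, MvPolynomial.coeff_monomial_mul, one_mul]
    exact MvPolynomial.mem_support_iff.1 hw
  obtain ⟨f, hf, hfle⟩ := hv _ hmem
  refine ⟨f - v, Set.mem_image_of_mem _ hf, ?_⟩
  rw [Finsupp.le_def]
  intro j
  rw [Finsupp.tsub_apply]
  have := (Finsupp.le_def).1 hfle j
  simp only [Finsupp.add_apply] at this
  omega

lemma exists_lt_coord {d c : Fin m →₀ ℕ} (hdc : d ≤ c) (hne : d ≠ c) : ∃ j, d j < c j := by
  by_contra h
  push_neg at h
  exact hne (le_antisymm hdc (Finsupp.le_def.2 h))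

lemma le_sub_single {d c : Fin m →₀ ℕ} {j : Fin m} (hdc : d ≤ c) (hj : d j < c j) :
    d ≤ c - Finsupp.single j 1 := by
  rw [Finsupp.le_def]
  intro j'
  rw [Finsupp.tsub_apply]
  have h1 := Finsupp.le_def.1 hdc j'
  rcases eq_or_ne j j' with rfl | hne
  · rw [Finsupp.single_eq_same]; omega
  · rw [Finsupp.single_eq_of_ne' hne]; omega

lemma expDeg_add (a b : Fin m →₀ ℕ) : expDeg (a + b) = expDeg a + expDeg b :=
  Finsupp.sum_add_index' (fun _ => rfl) (fun _ _ _ => rfl)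

lemma expDeg_single (j : Fin m) : expDeg (Finsupp.single j 1) = 1 := by
  rw [expDeg, Finsupp.sum_single_index]
  rfl

lemma sub_single_add {c : Fin m →₀ ℕ} {j : Fin m} (h : c j ≠ 0) :
    (c - Finsupp.single j 1) + Finsupp.single j 1 = c := by
  ext j'
  rw [Finsupp.add_apply, Finsupp.tsub_apply]
  rcases eq_or_ne j j' with rfl | hne
  · rw [Finsupp.single_eq_same]; omega
  · rw [Finsupp.single_eq_of_ne' hne]; omega

lemma expDeg_sub_single {c : Fin m →₀ ℕ} {j : Fin m} (h : c j ≠ 0) :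
    expDeg (c - Finsupp.single j 1) < expDeg c := by
  conv_rhs => rw [← sub_single_add h]
  rw [expDeg_add, expDeg_single]
  omega

lemma mingen_eq_gen {K : Ideal (MvPolynomial (Fin m) k)} {E : Set (Fin m →₀ ℕ)}
    (hKE : K = msp E) {c : Fin m →₀ ℕ} (hc : IsMinGen K c) : c ∈ E := by
  have h1 : (monomial c (1 : k)) ∈ msp E := hKE ▸ hc.1
  obtain ⟨e, he, hec⟩ := mono_mem_msp.1 h1
  rcases eq_or_ne e c with rfl | hne
  · exact he
  · obtain ⟨j, hj⟩ := exists_lt_coord hec hne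
    exfalso
    refine hc.2 j (by omega) ?_
    rw [hKE]
    exact mono_mem_msp.2 ⟨e, he, le_sub_single hec hj⟩

lemma mingen_not_lt {K : Ideal (MvPolynomial (Fin m) k)} {E : Set (Fin m →₀ ℕ)}
    (hKE : K = msp E) {c d : Fin m →₀ ℕ} (hc : IsMinGen K c)
    (hd : (monomial d (1 : k)) ∈ K) (hdc : d ≤ c) : d = c := by
  rcases eq_or_ne d c with rfl | hne
  · rfl
  · obtain ⟨j, hj⟩ := exists_lt_coord hdc hne
    exfalso
    refine hc.2 j (by omega) ?_
    rw [hKE]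
    exact msp_upward (hKE ▸ hd) (le_sub_single hdc hj)

lemma exists_mingen_le {K : Ideal (MvPolynomial (Fin m) k)} {E : Set (Fin m →₀ ℕ)}
    (hKE : K = msp E) (hK1 : (1 : MvPolynomial (Fin m) k) ∉ K) :
    ∀ c, (monomial c (1 : k)) ∈ K → ∃ d, IsMinGen K d ∧ d ≤ c := by
  suffices H : ∀ n c, expDeg c = n → (monomial c (1 : k)) ∈ K →
      ∃ d, IsMinGen K d ∧ d ≤ c by
    exact fun c hc => H _ c rfl hc
  intro n
  induction n using Nat.strong_induction_on with
  | _ n ih =>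
    intro c hdeg hc
    by_cases hmin : IsMinGen K c
    · exact ⟨c, hmin, le_refl c⟩
    · rw [IsMinGen] at hmin
      push_neg at hmin
      obtain ⟨j, hj, hjmem⟩ := hmin hc
      subst hdeg
      obtain ⟨d, hd, hdle⟩ := ih _ (expDeg_sub_single hj) _ rfl hjmem
      exact ⟨d, hd, hdle.trans tsub_le_self⟩

lemma msp_mono {E F : Set (Fin m →₀ ℕ)} (h : E ⊆ F) : msp (k := k) E ≤ msp F :=
  Ideal.span_mono (Set.image_mono h)

lemma msp_insert (w : Fin m →₀ ℕ) (E : Set (Fin m →₀ ℕ)) :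
    msp (k := k) (insert w E) = Ideal.span {monomial w (1 : k)} ⊔ msp E := by
  rw [msp, Set.image_insert_eq, Ideal.span_insert]
  rfl

open RingTheory.Sequence in
theorem hd_no_shared_var {rs : List (MvPolynomial (Fin m) k)}
    (hreg : IsWeaklyRegular (MvPolynomial (Fin m) k) rs)
    {E : Set (Fin m →₀ ℕ)} (hKE : Ideal.ofList rs = msp E)
    (hsq : ∀ e ∈ E, ∀ j, e j ≤ 1) :
    ∀ b b', IsMinGen (Ideal.ofList rs) b → IsMinGen (Ideal.ofList rs) b' →
      b ≠ b' → ∀ y, b y ≠ 0 → b' y ≠ 0 → False := by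
  intro b0 b0' hb0 hb0' hne0 y0 hy00 hy00'
  set K := Ideal.ofList rs with hKdef
  -- the set of "bad" cardinalities
  set Bad : ℕ → Prop := fun n => ∃ b b' y, IsMinGen K b ∧ IsMinGen K b' ∧ b ≠ b' ∧
    b y ≠ 0 ∧ b' y ≠ 0 ∧ (b.support ∪ b'.support).card = n with hBadDef
  have hBadne : Bad ((b0.support ∪ b0'.support).card) :=
    ⟨b0, b0', y0, hb0, hb0', hne0, hy00, hy00', rfl⟩
  have hnonempty : {n | Bad n}.Nonempty := ⟨_, hBadne⟩
  have hmem : Bad (sInf {n | Bad n}) := Nat.sInf_mem hnonempty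
  set n0 := sInf {n | Bad n} with hn0
  have hminimal : ∀ n', Bad n' → n0 ≤ n' := fun n' h => Nat.sInf_le h
  obtain ⟨b, b', y, hb, hb', hne, hy, hy', hcard⟩ := hmem
  -- basic facts
  have hK1 : (1 : MvPolynomial (Fin m) k) ∉ K := by
    intro h1
    exact hb.2 y hy (Ideal.eq_top_iff_one K |>.2 h1 ▸ Submodule.mem_top)
  have hsqb : ∀ j, b j ≤ 1 := hsq _ (mingen_eq_gen hKE hb)
  have hsqb' : ∀ j, b' j ≤ 1 := hsq _ (mingen_eq_gen hKE hb')
  -- the lcm L and complements u v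
  obtain ⟨L, hL⟩ : ∃ L : Fin m →₀ ℕ, ∀ j, L j = max (b j) (b' j) :=
    ⟨b + (b' - b), fun j => by
      rw [Finsupp.add_apply, Finsupp.tsub_apply]; omega⟩
  obtain ⟨u, hu⟩ : ∃ u : Fin m →₀ ℕ, ∀ j, u j = L j - b' j :=
    ⟨L - b', fun j => Finsupp.tsub_apply L b' j⟩
  obtain ⟨v, hv⟩ : ∃ v : Fin m →₀ ℕ, ∀ j, v j = L j - b j :=
    ⟨L - b, fun j => Finsupp.tsub_apply L b j⟩
  have hub' : u + b' = L := by
    ext j; rw [Finsupp.add_apply, hu j, hL j]; omega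
  have hvb : v + b = L := by
    ext j; rw [Finsupp.add_apply, hv j, hL j]; omega
  have hunotin : (monomial u (1 : k)) ∉ K := by
    intro hin
    refine hb.2 y hy ?_
    rw [hKE]
    refine msp_upward (hKE ▸ hin) ?_
    rw [Finsupp.le_def]
    intro j
    rw [Finsupp.tsub_apply]
    have h1 := hsqb j
    rcases eq_or_ne y j with rfl | hne'
    · rw [Finsupp.single_eq_same, hu y, hL y]; omega
    · rw [Finsupp.single_eq_of_ne' hne', hu j, hL j]; omega
  have hvnotin : (monomial v (1 : k)) ∉ K := by
    intro hin
    refine hb'.2 y hy' ?_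
    rw [hKE]
    refine msp_upward (hKE ▸ hin) ?_
    rw [Finsupp.le_def]
    intro j
    rw [Finsupp.tsub_apply]
    rcases eq_or_ne y j with rfl | hne'
    · rw [Finsupp.single_eq_same, hv y, hL y]; omega
    · rw [Finsupp.single_eq_of_ne' hne', hv j, hL j]; omega
  -- representations
  obtain ⟨p, hp⟩ := (mem_ofList_iff rs _).1 hb.1
  obtain ⟨q, hq⟩ := (mem_ofList_iff rs _).1 hb'.1
  -- the syzygy
  have hrel0 : ∑ i, ((monomial u (1 : k)) * q i - (monomial v (1 : k)) * p i) * rs.get i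
      = 0 := by
    have expand : ∑ i, ((monomial u (1 : k)) * q i - (monomial v (1 : k)) * p i) * rs.get i
        = (monomial u (1 : k)) * (∑ i, q i * rs.get i)
          - (monomial v (1 : k)) * (∑ i, p i * rs.get i) := by
      rw [Finset.mul_sum, Finset.mul_sum, ← Finset.sum_sub_distrib]
      exact Finset.sum_congr rfl (fun i _ => by ring)
    rw [expand, hp, hq, mono_mul, mono_mul, hub', hvb, sub_self]
  have hcoef := syzygy_coeff_mem rs hreg _ hrel0
  -- decompose the p i
  have huv : ∀ j, u j = 0 ∨ v j = 0 := by
    intro j; rw [hu j, hv j, hL j]; omega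
  have hdecomp : ∀ i, ∃ s t, t ∈ msp ((fun e => e - v) '' E) ∧
      p i = s * (monomial u (1 : k)) + t := by
    intro i
    have hvp : (monomial v (1 : k)) * p i ∈ msp (insert u E) := by
      have h1 : (monomial v (1 : k)) * p i = (monomial u (1 : k)) * q i
          - ((monomial u (1 : k)) * q i - (monomial v (1 : k)) * p i) := by ring
      rw [h1]
      refine sub_mem ?_ ?_
      · exact Ideal.mul_mem_right _ _
          (Ideal.subset_span ⟨u, Set.mem_insert u E, rfl⟩)
      · exact (msp_mono (Set.subset_insert u E)) (hKE ▸ hcoef i)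
    have ht := shift_mem hvp
    rw [Set.image_insert_eq] at ht
    have huvu : u - v = u := by
      ext j; rw [Finsupp.tsub_apply]; rcases huv j with h | h <;> omega
    rw [huvu, msp_insert] at ht
    obtain ⟨su, hsu, t, htmem, hsum⟩ := Submodule.mem_sup.1 ht
    obtain ⟨s, hs⟩ := Ideal.mem_span_singleton'.1 hsu
    exact ⟨s, t, htmem, by rw [← hsum, ← hs]⟩
  choose s t htmem hsum using hdecomp
  have hmemE : ∀ c : Fin m →₀ ℕ,
      ((monomial c (1 : k)) ∈ K) ↔ ((monomial c (1 : k)) ∈ msp E) := fun c => by rw [hKE]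
  have hvt : ∀ i, (monomial v (1 : k)) * t i ∈ K := by
    intro i
    refine mul_mem_of_forall_gens (fun w hw => ?_) (t i) (htmem i)
    obtain ⟨e, he, rfl⟩ := hw
    obtain ⟨e0, he0, rfl⟩ := he
    rw [mono_mul, hmemE]
    refine msp_upward (Ideal.subset_span ⟨e0, he0, rfl⟩) ?_
    rw [Finsupp.le_def]
    intro j
    rw [Finsupp.add_apply, Finsupp.tsub_apply]
    omega
  -- the monomial L lies in a small monomial ideal
  have hLmem : (monomial L (1 : k)) ∈
      msp ((fun e => u + v + e) '' E ∪ Set.image2 (· + ·) E E) := by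
    have h1 : (monomial L (1 : k)) = ∑ i, ((monomial v (1 : k)) * p i) * rs.get i := by
      rw [← hvb, ← mono_mul, ← hp, Finset.mul_sum]
      exact Finset.sum_congr rfl (fun i _ => by ring)
    have hrsK : ∀ i : Fin rs.length, rs.get i ∈ msp E := fun i => by
      rw [← hKE]
      exact Ideal.subset_span (List.get_mem rs i)
    rw [h1]
    refine Ideal.sum_mem _ (fun i _ => ?_)
    have h2 : ((monomial v (1 : k)) * p i) * rs.get i
        = ((monomial u (1 : k)) * (monomial v (1 : k))) * (s i * rs.get i)
          + ((monomial v (1 : k)) * t i) * rs.get i := by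
      rw [hsum i]; ring
    rw [h2]
    refine add_mem ?_ ?_
    · have h3 : (monomial u (1 : k)) * (monomial v (1 : k)) ∈ msp {u + v} := by
        rw [mono_mul]
        exact Ideal.subset_span ⟨u + v, rfl, rfl⟩
      have h4 : s i * rs.get i ∈ msp E := Ideal.mul_mem_left _ _ (hrsK i)
      have h5 := mul_msp_mem h3 h4
      refine msp_mono ?_ h5
      intro z hz
      rw [Set.image2_singleton_left] at hz
      exact Set.mem_union_left _ hz
    · have h7 := mul_msp_mem ((hKE ▸ hvt i : _)) (hrsK i)
      exact msp_mono Set.subset_union_right h7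
  obtain ⟨z, hz, hzL⟩ := mono_mem_msp.1 hLmem
  rcases hz with ⟨e, he, rfl⟩ | hz2
  · -- case 1 : u + v + e ≤ L, impossible
    have heb : e ≤ b := by
      rw [Finsupp.le_def]
      intro j
      have := Finsupp.le_def.1 hzL j
      simp only [Finsupp.add_apply] at this
      rw [hu j, hv j] at this
      have := hL j
      omega
    have heb' : e ≤ b' := by
      rw [Finsupp.le_def]
      intro j
      have := Finsupp.le_def.1 hzL j
      simp only [Finsupp.add_apply] at this
      rw [hu j, hv j] at this
      have := hL j
      omega
    have hemem : (monomial e (1 : k)) ∈ K := hKE ▸ Ideal.subset_span ⟨e, he, rfl⟩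
    have h8 : e = b := mingen_not_lt hKE hb hemem heb
    have h9 : e = b' := mingen_not_lt hKE hb' hemem heb'
    exact hne (h8 ▸ h9)
  · -- case 2 : e + e' ≤ L with e, e' ∈ E
    obtain ⟨e, he, e', he', rfl⟩ := hz2
    obtain ⟨d, hd, hdle⟩ := exists_mingen_le hKE hK1 e
      (hKE ▸ Ideal.subset_span ⟨e, he, rfl⟩)
    obtain ⟨d', hd', hdle'⟩ := exists_mingen_le hKE hK1 e'
      (hKE ▸ Ideal.subset_span ⟨e', he', rfl⟩)
    have hddL : ∀ j, d j + d' j ≤ L j := by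
      intro j
      have h1 := Finsupp.le_def.1 hzL j
      have h2 := Finsupp.le_def.1 hdle j
      have h3 := Finsupp.le_def.1 hdle' j
      simp only [Finsupp.add_apply] at h1
      omega
    have hL1 : ∀ j, L j ≤ 1 := by
      intro j; rw [hL j]; have := hsqb j; have := hsqb' j; omega
    have hmone : ∀ c : Fin m →₀ ℕ, c = 0 → (monomial c (1 : k)) = 1 := by
      intro c hc; rw [hc]; simp
    have hd0 : d ≠ 0 := by
      intro h0
      exact hK1 (hmone d h0 ▸ hd.1)
    have hd0' : d' ≠ 0 := by
      intro h0
      exact hK1 (hmone d' h0 ▸ hd'.1)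
    have hdneb : d ≠ b := by
      intro h0
      apply hvnotin
      rw [hmemE]
      refine msp_upward ((hmemE d').1 hd'.1) ?_
      rw [Finsupp.le_def]
      intro j
      have h1 := hddL j
      have h2 : d j = b j := by rw [h0]
      have h3 := hL j
      rw [hv j]
      omega
    have hdneb' : d ≠ b' := by
      intro h0
      apply hunotin
      rw [hmemE]
      refine msp_upward ((hmemE d').1 hd'.1) ?_
      rw [Finsupp.le_def]
      intro j
      have h1 := hddL j
      have h2 : d j = b' j := by rw [h0]
      have h3 := hL j
      rw [hu j]
      omega
    have hdneb2 : d' ≠ b := by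
      intro h0
      apply hvnotin
      rw [hmemE]
      refine msp_upward ((hmemE d).1 hd.1) ?_
      rw [Finsupp.le_def]
      intro j
      have h1 := hddL j
      have h2 : d' j = b j := by rw [h0]
      have h3 := hL j
      rw [hv j]
      omega
    have hdneb2' : d' ≠ b' := by
      intro h0
      apply hunotin
      rw [hmemE]
      refine msp_upward ((hmemE d).1 hd.1) ?_
      rw [Finsupp.le_def]
      intro j
      have h1 := hddL j
      have h2 : d' j = b' j := by rw [h0]
      have h3 := hL j
      rw [hu j]
      omega
    -- any small min generator shares a variable with both b and b'
    have hshare : ∀ c : Fin m →₀ ℕ, IsMinGen K c → c ≠ b → c ≠ b' →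
        (∀ j, c j ≤ L j) → (∃ z, c z ≠ 0 ∧ b z ≠ 0) ∧ (∃ z, c z ≠ 0 ∧ b' z ≠ 0) := by
      intro c hc hcb hcb' hcL
      constructor
      · by_contra hno
        push_neg at hno
        have hcleb' : c ≤ b' := by
          rw [Finsupp.le_def]
          intro j
          have h1 := hcL j
          have h2 := hL j
          rcases Nat.eq_zero_or_pos (c j) with h3 | h3
          · omega
          · have h4 := hno j (by omega)
            omega
        exact hcb' (mingen_not_lt hKE hb' hc.1 hcleb')
      · by_contra hno
        push_neg at hno
        have hcleb : c ≤ b := by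
          rw [Finsupp.le_def]
          intro j
          have h1 := hcL j
          have h2 := hL j
          rcases Nat.eq_zero_or_pos (c j) with h3 | h3
          · omega
          · have h4 := hno j (by omega)
            omega
        exact hcb (mingen_not_lt hKE hb hc.1 hcleb)
    -- support of small min generators is contained in the union
    have hsuppU : ∀ c : Fin m →₀ ℕ, (∀ j, c j ≤ L j) →
        c.support ⊆ b.support ∪ b'.support := by
      intro c hcL z hzc
      rw [Finsupp.mem_support_iff] at hzc
      have h1 := hcL z
      have h2 := hL z
      rw [Finset.mem_union, Finsupp.mem_support_iff, Finsupp.mem_support_iff]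
      omega
    -- by minimality, small min generators sharing a variable cover the union
    have hcover : ∀ c : Fin m →₀ ℕ, IsMinGen K c → (∀ j, c j ≤ L j) →
        (∃ z, c z ≠ 0 ∧ b z ≠ 0) → c ≠ b →
        ∀ w, b' w ≠ 0 → b w = 0 → c w ≠ 0 := by
      intro c hc hcL hsh hcb w hw1 hw2
      obtain ⟨z, hz1, hz2⟩ := hsh
      have hBadc : Bad ((b.support ∪ c.support).card) :=
        ⟨b, c, z, hb, hc, fun h => hcb h.symm, hz2, hz1, rfl⟩
      have h1 := hminimal _ hBadc
      have h2 : b.support ∪ c.support ⊆ b.support ∪ b'.support :=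
        Finset.union_subset Finset.subset_union_left
          ((hsuppU c hcL).trans (le_refl _))
      have h4 : b.support ∪ c.support = b.support ∪ b'.support :=
        Finset.eq_of_subset_of_card_le h2 (by omega)
      have h5 : w ∈ b.support ∪ c.support := by
        rw [h4, Finset.mem_union]
        right
        rwa [Finsupp.mem_support_iff]
      rw [Finset.mem_union, Finsupp.mem_support_iff, Finsupp.mem_support_iff] at h5
      rcases h5 with h5 | h5
      · exact absurd hw2 h5
      · exact h5
    have hcover' : ∀ c : Fin m →₀ ℕ, IsMinGen K c → (∀ j, c j ≤ L j) →
        (∃ z, c z ≠ 0 ∧ b' z ≠ 0) → c ≠ b' →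
        ∀ w, b w ≠ 0 → b' w = 0 → c w ≠ 0 := by
      intro c hc hcL hsh hcb' w hw1 hw2
      obtain ⟨z, hz1, hz2⟩ := hsh
      have hBadc : Bad ((b'.support ∪ c.support).card) :=
        ⟨b', c, z, hb', hc, fun h => hcb' h.symm, hz2, hz1, rfl⟩
      have h1 := hminimal _ hBadc
      have h2 : b'.support ∪ c.support ⊆ b.support ∪ b'.support := by
        refine Finset.union_subset ?_ (hsuppU c hcL)
        exact Finset.subset_union_right
      have h3 : (b.support ∪ b'.support).card ≤ (b'.support ∪ c.support).card := by
        omega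
      have h4 : b'.support ∪ c.support = b.support ∪ b'.support :=
        Finset.eq_of_subset_of_card_le h2 h3
      have h5 : w ∈ b'.support ∪ c.support := by
        rw [h4, Finset.mem_union]
        left
        rwa [Finsupp.mem_support_iff]
      rw [Finset.mem_union, Finsupp.mem_support_iff, Finsupp.mem_support_iff] at h5
      rcases h5 with h5 | h5
      · exact absurd hw2 h5
      · exact h5
    -- wrap up
    have hdL : ∀ j, d j ≤ L j := fun j => by have := hddL j; omega
    have hdL' : ∀ j, d' j ≤ L j := fun j => by have := hddL j; omega
    obtain ⟨hshb, hshb'⟩ := hshare d hd hdneb hdneb' hdL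
    obtain ⟨hshb2, hshb2'⟩ := hshare d' hd' hdneb2 hdneb2' hdL'
    obtain ⟨j, hj⟩ : ∃ j, b j ≠ b' j := by
      by_contra h
      push_neg at h
      exact hne (Finsupp.ext h)
    have hsb := hsqb j
    have hsb' := hsqb' j
    rcases Nat.eq_zero_or_pos (b j) with hbj | hbj
    · have hb'j : b' j ≠ 0 := by omega
      have h6 := hcover d hd hdL hshb hdneb j hb'j hbj
      have h7 := hcover d' hd' hdL' hshb2 hdneb2 j hb'j hbj
      have h8 := hddL j
      have h9 := hL1 j
      omega
    · have hb'j : b' j = 0 := by omega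
      have h6 := hcover' d hd hdL hshb' hdneb' j (by omega) hb'j
      have h7 := hcover' d' hd' hdL' hshb2' hdneb2' j (by omega) hb'j
      have h8 := hddL j
      have h9 := hL1 j
      omega

lemma erase_eq_self_of_zero {c : Fin m →₀ ℕ} {x : Fin m} (h : c x = 0) :
    c.erase x = c := by
  ext j
  rcases eq_or_ne j x with rfl | hne
  · rw [Finsupp.erase_same, h]
  · rw [Finsupp.erase_ne hne]

lemma expDeg_le_card {c : Fin m →₀ ℕ} (h : ∀ j, c j ≤ 1) :
    expDeg c ≤ c.support.card := by
  rw [expDeg, Finsupp.sum, Finset.card_eq_sum_ones]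
  exact Finset.sum_le_sum (fun j _ => h j)

lemma msp_mingens {K : Ideal (MvPolynomial (Fin m) k)} {E : Set (Fin m →₀ ℕ)}
    (hKE : K = msp E) : K = msp {c | IsMinGen K c} := by
  refine le_antisymm ?_ ?_
  · conv_lhs => rw [hKE]
    rw [msp]
    refine Ideal.span_le.2 ?_
    rintro r ⟨e, heA, rfl⟩
    have heI : (monomial e (1 : k)) ∈ K := hKE ▸ Ideal.subset_span ⟨e, heA, rfl⟩
    clear heA
    suffices H : ∀ n e, expDeg e = n → (monomial e (1 : k)) ∈ K →
        (monomial e (1 : k)) ∈ msp {c | IsMinGen K c} by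
      exact H _ e rfl heI
    intro n
    induction n using Nat.strong_induction_on with
    | _ n ih =>
      intro e hdeg he
      by_cases hmin : IsMinGen K e
      · exact Ideal.subset_span ⟨e, hmin, rfl⟩
      · rw [IsMinGen] at hmin
        push_neg at hmin
        obtain ⟨j, hj, hjmem⟩ := hmin he
        subst hdeg
        have hrec := ih _ (expDeg_sub_single hj) _ rfl hjmem
        have heeq : (monomial (Finsupp.single j 1) (1 : k))
            * monomial (e - Finsupp.single j 1) 1 = monomial e 1 := by
          rw [mono_mul, add_comm, sub_single_add hj]
        rw [← heeq]
        exact Ideal.mul_mem_left _ _ hrec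
  · rw [msp]
    refine Ideal.span_le.2 ?_
    rintro r ⟨c, hc, rfl⟩
    exact hc.1

lemma ofList_map_mono (l : List (Fin m →₀ ℕ)) :
    Ideal.ofList (l.map (fun c => monomial c (1 : k))) = msp {c | c ∈ l} := by
  rw [Ideal.ofList, msp]
  congr 1
  ext r
  simp only [Set.mem_setOf_eq, List.mem_map, Set.mem_image]

end Monomial

/-- **Lemma.** If `I` is a nearly complete intersection and `F` is a minimal monomial
generator of `I`, then `F` has a variable in common with some other minimal generator. -/
theorem nci_min_gen_shares_variable (k : Type) [Field k] (m : ℕ)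
    (I : Ideal (MvPolynomial (Fin m) k)) (hI : IsNCI I)
    (a : Fin m →₀ ℕ) (ha : IsMinGen I a) :
    ∃ b, IsMinGen I b ∧ b ≠ a ∧ (a.support ∩ b.support).Nonempty := by
  obtain ⟨A, hsqA, hIA⟩ := hI.1
  have hImsp : I = msp A := hIA
  obtain ⟨hdeg, hnotCI, hsubCI⟩ := hI.2
  by_contra hcon
  push_neg at hcon
  have hdisj : ∀ b, IsMinGen I b → b ≠ a → ∀ j, a j = 0 ∨ b j = 0 := by
    intro b hb hba j
    by_contra h
    push_neg at h
    refine Finset.eq_empty_iff_forall_notMem.1 (hcon b hb hba) j ?_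
    rw [Finset.mem_inter, Finsupp.mem_support_iff, Finsupp.mem_support_iff]
    exact h
  have hmgsq : ∀ c, IsMinGen I c → ∀ j, c j ≤ 1 :=
    fun c hc => hsqA _ (mingen_eq_gen hImsp hc)
  have h1I : (1 : MvPolynomial (Fin m) k) ∉ I := by
    intro h1
    have hmin0 : IsMinGen I (0 : Fin m →₀ ℕ) := by
      constructor
      · simpa using h1
      · intro j hj
        simp at hj
    have := hdeg 0 hmin0
    have h0 : expDeg (0 : Fin m →₀ ℕ) = 0 := by
      rw [expDeg]
      simp
    omega
  -- two distinct variables in the support of a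
  have hcard2 : 2 ≤ a.support.card := by
    have h1 := hdeg a ha
    have h2 := expDeg_le_card (hmgsq a ha)
    omega
  obtain ⟨x, hxmem, y, hymem, hxy⟩ := Finset.one_lt_card.1 (by omega : 1 < a.support.card)
  rw [Finsupp.mem_support_iff] at hxmem hymem
  -- the regular sequence generating I(x=1)
  obtain ⟨rs, hrsreg, hrsspan⟩ := hsubCI x ⟨a, ha, hxmem⟩
  have hJmsp : Ideal.ofList rs = msp ((fun c => c.erase x) '' {c | IsMinGen I c}) := by
    have hof : Ideal.ofList rs = Ideal.span {r | r ∈ rs} := rfl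
    rw [hof, ← hrsspan, subOne, msp, Set.image_image]
  have hsqJ : ∀ e ∈ (fun c => c.erase x) '' {c | IsMinGen I c}, ∀ j, e j ≤ 1 := by
    rintro e ⟨c, hc, rfl⟩ j
    rcases eq_or_ne j x with rfl | hne
    · rw [Finsupp.erase_same]
      omega
    · rw [Finsupp.erase_ne hne]
      exact hmgsq c hc j
  -- minimal generators of I other than a are minimal generators of I(x=1)
  have hbJ : ∀ b, IsMinGen I b → b ≠ a → IsMinGen (Ideal.ofList rs) b := by
    intro b hb hba
    have hbx : b x = 0 := (hdisj b hb hba x).resolve_left hxmem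
    have hbe : b.erase x = b := erase_eq_self_of_zero hbx
    constructor
    · rw [hJmsp]
      exact mono_mem_msp.2 ⟨b, ⟨b, hb, hbe⟩, le_refl b⟩
    · intro j hj hmem
      rw [hJmsp, mono_mem_msp] at hmem
      obtain ⟨e, ⟨c, hcmin, rfl⟩, hele⟩ := hmem
      rcases eq_or_ne c a with hceq | hca
      · rw [hceq] at hele
        have hy1 : (a.erase x) y = a y := Finsupp.erase_ne (fun h => hxy h.symm)
        have h2 := Finsupp.le_def.1 hele y
        rw [hy1, Finsupp.tsub_apply] at h2
        have hby : b y ≠ 0 := by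
          have h3 := hymem
          omega
        rcases hdisj b hb hba y with h | h
        · exact hymem h
        · exact hby h
      · have hcx : c x = 0 := (hdisj c hcmin hca x).resolve_left hxmem
        have hele2 : c.erase x ≤ b - Finsupp.single j 1 := hele
        clear hele
        rename' hele2 => hele
        rw [erase_eq_self_of_zero hcx] at hele
        refine hb.2 j hj ?_
        rw [hImsp]
        exact msp_upward (hImsp ▸ hcmin.1) hele
  -- distinct minimal generators of I other than a share no variable
  have hcopJ : ∀ b b', IsMinGen I b → b ≠ a → IsMinGen I b' → b' ≠ a → b ≠ b' →
      ∀ j, b j = 0 ∨ b' j = 0 := by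
    intro b b' hb hba hb' hba' hne j
    by_contra h
    push_neg at h
    exact hd_no_shared_var hrsreg.toIsWeaklyRegular hJmsp hsqJ b b'
      (hbJ b hb hba) (hbJ b' hb' hba') hne j h.1 h.2
  -- all distinct minimal generators of I are pairwise coprime
  have hcop : ∀ c c', IsMinGen I c → IsMinGen I c' → c ≠ c' → ∀ j, c j = 0 ∨ c' j = 0 := by
    intro c c' hc hc' hne j
    rcases eq_or_ne c a with rfl | hca
    · exact hdisj c' hc' (fun h => hne h.symm) j
    · rcases eq_or_ne c' a with rfl | hca'
      · exact (hdisj c hc hca j).symm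
      · exact hcopJ c c' hc hca hc' hca' hne j
  -- finiteness of the set of minimal generators
  have hfin : {c | IsMinGen I c}.Finite := by
    refine Set.Finite.subset
      (Set.finite_range (fun s : Finset (Fin m) => Finsupp.indicator s (fun _ _ => (1 : ℕ)))) ?_
    intro c hc
    refine ⟨c.support, ?_⟩
    ext j
    classical
    rw [Finsupp.indicator_apply]
    have h1 := hmgsq c hc j
    split_ifs with h
    · rw [Finsupp.mem_support_iff] at h
      omega
    · rw [Finsupp.mem_support_iff, not_not] at h
      omega
  set lst := hfin.toFinset.toList with hlstdef
  have hnodup : lst.Nodup := Finset.nodup_toList _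
  have hmemlst : ∀ c, c ∈ lst ↔ IsMinGen I c := by
    intro c
    rw [hlstdef, Finset.mem_toList, Set.Finite.mem_toFinset]
    rfl
  set ls := lst.map (fun c => monomial c (1 : k)) with hlsdef
  have hspan : Ideal.ofList ls = I := by
    rw [hlsdef, ofList_map_mono]
    have : {c | c ∈ lst} = {c | IsMinGen I c} := Set.ext (fun c => hmemlst c)
    rw [this]
    exact (msp_mingens hImsp).symm
  -- ls is a weakly regular sequence
  have hwr : RingTheory.Sequence.IsWeaklyRegular (MvPolynomial (Fin m) k) ls := by
    rw [RingTheory.Sequence.isWeaklyRegular_iff]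
    intro i hi
    rw [isSMulRegular_quot_iff]
    have hilen : i < lst.length := by
      rw [hlsdef, List.length_map] at hi
      exact hi
    have hgeti : ls[i] = monomial lst[i] (1 : k) := by
      simp only [hlsdef, List.getElem_map]
    have htake : Ideal.ofList (ls.take i) = msp {c | c ∈ lst.take i} := by
      rw [hlsdef, ← List.map_take, ofList_map_mono]
    rw [hgeti, htake]
    intro f hf
    rw [mem_msp_iff] at hf ⊢
    intro w hw
    have hmem2 : (lst[i] + w) ∈ ((monomial lst[i] (1 : k)) * f).support := by
      rw [MvPolynomial.mem_support_iff, MvPolynomial.coeff_monomial_mul, one_mul]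
      exact MvPolynomial.mem_support_iff.1 hw
    obtain ⟨e, he, hele⟩ := hf _ hmem2
    refine ⟨e, he, ?_⟩
    -- e is a min gen distinct from lst[i]
    have hemin : IsMinGen I e := (hmemlst e).1 (List.mem_of_mem_take he)
    have himin : IsMinGen I lst[i] := (hmemlst _).1 (List.getElem_mem hilen)
    have hne : e ≠ lst[i] := by
      obtain ⟨j, hjlen, hjeq⟩ := List.getElem_of_mem he
      have hjlen' : j < i := by
        have := hjlen
        rw [List.length_take] at this
        omega
      rw [List.getElem_take] at hjeq
      intro hcontra
      have : lst[j] = lst[i] := by rw [hjeq, hcontra]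
      have hinj := (List.Nodup.getElem_inj_iff hnodup).1 this
      omega
    have hcope := hcop e lst[i] hemin himin hne
    rw [Finsupp.le_def]
    intro j
    have h1 := Finsupp.le_def.1 hele j
    rw [Finsupp.add_apply] at h1
    rcases hcope j with h | h
    · omega
    · omega
  -- conclude that I is a complete intersection
  refine hnotCI ⟨ls, ⟨hwr, ?_⟩, ?_⟩
  · rw [my_smul_top_eq]
    intro htop
    rw [← htop] at hspan
    exact h1I (hspan ▸ Submodule.mem_top)
  · exact hspan.symm

end
end
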